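/- Let N ≥ 1 be an integer and let d_1,…,d_{2N} be positive reals appearing in equal pairs (each value occurring an even number of times), with d_min = min_i d_i. Let D = diag(d_1,…,d_{2N}), let r > 0, and let o be a random vector uniformly distributed on the sphere {x ∈ ℝ^{2N} : ‖x‖ = r}. Then for every β > 0, P(‖D^{1/2} o‖ < √β) ≤ [2N · β^{N − 1/2}] / [r^{2N−1} · (∏_{i=1}^{2N} √d_i) · (2/√d_min)]. -/

import Mathlib

open MeasureTheory Matrix

/-- The product measurable-space structure on matrices. -/
instance matrixMeasurableSpace {m n α : Type*} [MeasurableSpace α] :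
    MeasurableSpace (Matrix m n α) :=
  inferInstanceAs (MeasurableSpace (m → n → α))

noncomputable section

/-- The Euclidean norm of a real vector. -/
def euclNorm {ι : Type*} [Fintype ι] (x : ι → ℝ) : ℝ :=
  Real.sqrt (∑ i, x i ^ 2)

/-- The Euclidean norm of an integer vector. -/
def intNorm {ι : Type*} [Fintype ι] (a : ι → ℤ) : ℝ :=
  euclNorm (fun i => (a i : ℝ))

/-- The real representation `[[Re M, -Im M],[Im M, Re M]]` of a complex matrix. -/
def realRep {n : ℕ} (M : Matrix (Fin n) (Fin n) ℂ) :
    Matrix (Fin n ⊕ Fin n) (Fin n ⊕ Fin n) ℝ :=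
  Matrix.fromBlocks (M.map Complex.re) (-(M.map Complex.im))
    (M.map Complex.im) (M.map Complex.re)

/-- The set of points of the lattice generated by the columns of `G`. -/
def latticePts {ι : Type*} [Fintype ι] (G : Matrix ι ι ℝ) : Set (ι → ℝ) :=
  {x | ∃ a : ι → ℤ, x = G *ᵥ fun i => (a i : ℝ)}

/-- The `k`-th successive minimum of the lattice generated by the columns of `G`:
the infimum of the radii `r > 0` such that the lattice points of norm at most `r`
span a subspace of dimension at least `k`. -/
def succMin {ι : Type*} [Fintype ι] (G : Matrix ι ι ℝ) (k : ℕ) : ℝ :=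
  sInf {r : ℝ | 0 < r ∧
    k ≤ Module.finrank ℝ (Submodule.span ℝ {x | x ∈ latticePts G ∧ euclNorm x ≤ r})}

/-- The achievable rate of integer forcing,
`R_IF(D,V) = N_t · log₂ (1/λ_{2N_t}(Λ)²)`, where `Λ` is the lattice generated by
the columns of `D^{-1/2} Vᵀ` and `D = diag d`. -/
def RIF (Nt : ℕ) (d : Fin Nt ⊕ Fin Nt → ℝ)
    (V : Matrix (Fin Nt ⊕ Fin Nt) (Fin Nt ⊕ Fin Nt) ℝ) : ℝ :=
  Nt * Real.logb 2
    (1 / (succMin (Matrix.diagonal (fun i => (Real.sqrt (d i))⁻¹) * Vᵀ) (2 * Nt)) ^ 2)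

/-- `α_{N_t} = ((2N_t+3)/4)·((2/π)·Γ(2+N_t)^{1/N_t})²`. -/
def alphaNt (Nt : ℕ) : ℝ :=
  ((2 * Nt + 3) / 4) * ((2 / Real.pi) * (Real.Gamma (2 + Nt)) ^ ((1 : ℝ) / Nt)) ^ 2

/-- `A(β,d;ι) = {a ∈ ℤ^ι : 0 < ‖a‖ < √(β/d)}`. -/
def Aset (ι : Type*) [Fintype ι] (β dm : ℝ) : Set (ι → ℤ) :=
  {a | 0 < intNorm a ∧ intNorm a < Real.sqrt (β / dm)}

open scoped ENNReal NNReal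

set_option maxHeartbeats 1000000
set_option synthInstance.maxHeartbeats 1000000

namespace Aux

variable {ι : Type*} [Fintype ι] [DecidableEq ι]

lemma sqsum_nonneg (x : ι → ℝ) : 0 ≤ ∑ i, x i ^ 2 :=
  Finset.sum_nonneg fun i _ => sq_nonneg _

lemma euclNorm_nonneg (x : ι → ℝ) : 0 ≤ euclNorm x := Real.sqrt_nonneg _

lemma euclNorm_le_iff {x : ι → ℝ} {t : ℝ} (ht : 0 ≤ t) :
    euclNorm x ≤ t ↔ ∑ i, x i ^ 2 ≤ t ^ 2 := by
  constructor
  · intro h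
    have h0 := sqsum_nonneg x
    have : (Real.sqrt (∑ i, x i ^ 2)) ^ 2 ≤ t ^ 2 :=
      pow_le_pow_left₀ (Real.sqrt_nonneg _) h 2
    rwa [Real.sq_sqrt h0] at this
  · intro h
    have := Real.sqrt_le_sqrt h
    rwa [Real.sqrt_sq ht] at this

lemma euclNorm_lt_iff {x : ι → ℝ} {t : ℝ} (ht : 0 ≤ t) :
    euclNorm x < t ↔ ∑ i, x i ^ 2 < t ^ 2 := by
  constructor
  · intro h
    have h0 := sqsum_nonneg x
    have h1 : (Real.sqrt (∑ i, x i ^ 2)) ^ 2 < t ^ 2 := by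
      apply pow_lt_pow_left₀ h (Real.sqrt_nonneg _)
      norm_num
    rwa [Real.sq_sqrt h0] at h1
  · intro h
    have := Real.sqrt_lt_sqrt (sqsum_nonneg x) h
    rwa [Real.sqrt_sq ht] at this

lemma euclNorm_eq_iff {x : ι → ℝ} {t : ℝ} (ht : 0 ≤ t) :
    euclNorm x = t ↔ ∑ i, x i ^ 2 = t ^ 2 := by
  constructor
  · intro h
    have := Real.sq_sqrt (sqsum_nonneg x)
    rw [← euclNorm, h] at this
    exact this.symm
  · intro h
    rw [euclNorm, h, Real.sqrt_sq ht]

lemma euclNorm_pos_iff {x : ι → ℝ} : 0 < euclNorm x ↔ x ≠ 0 := by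
  rw [euclNorm, Real.sqrt_pos]
  constructor
  · rintro h rfl; simp at h
  · intro h
    rcases Function.ne_iff.1 h with ⟨i, hi⟩
    have hxi : x i ≠ 0 := by simpa using hi
    have : (0:ℝ) < x i ^ 2 := by positivity
    have h2 := Finset.single_le_sum (f := fun i => x i ^ 2)
      (fun i _ => sq_nonneg _) (Finset.mem_univ i)
    linarith

lemma euclNorm_smul (c : ℝ) (hc : 0 ≤ c) (x : ι → ℝ) :
    euclNorm (fun i => c * x i) = c * euclNorm x := by
  rw [euclNorm, euclNorm]
  have : ∑ i, (c * x i) ^ 2 = c ^ 2 * ∑ i, x i ^ 2 := by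
    rw [Finset.mul_sum]; exact Finset.sum_congr rfl fun i _ => by ring
  rw [this, Real.sqrt_mul (by positivity), Real.sqrt_sq hc]

lemma continuous_euclNorm : Continuous (euclNorm (ι := ι)) := by
  exact Real.continuous_sqrt.comp (continuous_finset_sum _ fun i _ => by
    exact (continuous_apply i).pow 2)

/-- Orthogonal matrices preserve the sum of squares. -/
lemma sqsum_mulVec (O : Matrix.orthogonalGroup ι ℝ) (x : ι → ℝ) :
    ∑ i, ((O : Matrix ι ι ℝ) *ᵥ x) i ^ 2 = ∑ i, x i ^ 2 := by
  have h1 : ((O : Matrix ι ι ℝ) *ᵥ x) ⬝ᵥ ((O : Matrix ι ι ℝ) *ᵥ x) = x ⬝ᵥ x := by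
    rw [Matrix.dotProduct_mulVec, ← Matrix.mulVec_transpose, Matrix.mulVec_mulVec]
    have hO : (O : Matrix ι ι ℝ)ᵀ * (O : Matrix ι ι ℝ) = 1 := by
      have := (Matrix.mem_orthogonalGroup_iff' ι ℝ).mp O.2
      exact this
    rw [hO, Matrix.one_mulVec]
  simpa [dotProduct, pow_two] using h1

lemma euclNorm_mulVec (O : Matrix.orthogonalGroup ι ℝ) (x : ι → ℝ) :
    euclNorm ((O : Matrix ι ι ℝ) *ᵥ x) = euclNorm x := by
  rw [euclNorm, euclNorm, sqsum_mulVec]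

/-- transitivity: Householder reflection sending `y` to `x`. -/
lemma exists_orthogonal_mulVec (x y : ι → ℝ) (h : ∑ i, x i ^ 2 = ∑ i, y i ^ 2) :
    ∃ U : Matrix.orthogonalGroup ι ℝ, (U : Matrix ι ι ℝ) *ᵥ y = x := by
  by_cases hxy : x = y
  · exact ⟨1, by simp [hxy, Matrix.one_mulVec]⟩
  set v : ι → ℝ := x - y with hv
  have hvne : v ≠ 0 := sub_ne_zero.mpr hxy
  set c : ℝ := ∑ i, v i ^ 2 with hc
  have hcpos : 0 < c := by
    rcases Function.ne_iff.1 hvne with ⟨i, hi⟩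
    have hvi : v i ≠ 0 := by simpa using hi
    have h1 : (0:ℝ) < v i ^ 2 := by positivity
    have h2 := Finset.single_le_sum (f := fun i => v i ^ 2)
      (fun i _ => sq_nonneg _) (Finset.mem_univ i)
    linarith
  set U : Matrix ι ι ℝ :=
    Matrix.of fun i j => (if i = j then (1:ℝ) else 0) - (2 / c) * (v i * v j) with hU
  have hUsymm : Uᵀ = U := by
    ext i j
    simp only [hU, Matrix.transpose_apply, Matrix.of_apply]
    by_cases hij : i = j
    · subst hij; ring
    · rw [if_neg (Ne.symm hij), if_neg hij]; ring
  have key : U * U = 1 := by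
    ext i k
    have expand : (U * U) i k
        = ∑ j, ((if i = j then (1:ℝ) else 0) * (if j = k then (1:ℝ) else 0)
            - (if i = j then (1:ℝ) else 0) * ((2 / c) * (v j * v k))
            - ((2 / c) * (v i * v j)) * (if j = k then (1:ℝ) else 0)
            + ((2 / c) * (2 / c) * (v i * v k)) * v j ^ 2) := by
      rw [Matrix.mul_apply]
      refine Finset.sum_congr rfl fun j _ => ?_
      simp only [hU, Matrix.of_apply]
      ring
    rw [expand]
    simp only [Finset.sum_add_distrib, Finset.sum_sub_distrib, ite_mul, mul_ite, one_mul,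
      mul_one, zero_mul, mul_zero, Finset.sum_ite_eq, Finset.sum_ite_eq', Finset.mem_univ,
      if_true, ← Finset.mul_sum, ← hc]
    have hc' : c ≠ 0 := ne_of_gt hcpos
    by_cases hik : i = k <;> simp [Matrix.one_apply, hik] <;> field_simp <;> ring
  have hmem : U ∈ Matrix.orthogonalGroup ι ℝ := by
    rw [Matrix.mem_orthogonalGroup_iff]
    rw [hUsymm]
    exact key
  refine ⟨⟨U, hmem⟩, ?_⟩
  have hvy : 2 * ∑ j, v j * y j = -c := by
    have : c + 2 * ∑ j, v j * y j = ∑ j, x j ^ 2 - ∑ j, y j ^ 2 := by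
      rw [hc, Finset.mul_sum, ← Finset.sum_add_distrib, ← Finset.sum_sub_distrib]
      refine Finset.sum_congr rfl fun j _ => ?_
      simp only [hv, Pi.sub_apply]; ring
    rw [h] at this; linarith
  funext i
  have : ((U : Matrix ι ι ℝ) *ᵥ y) i
      = ∑ j, ((if i = j then (1:ℝ) else 0) * y j - (2 / c) * (v i * (v j * y j))) := by
    rw [Matrix.mulVec, dotProduct]
    refine Finset.sum_congr rfl fun j _ => ?_
    simp only [hU, Matrix.of_apply]; ring
  rw [this]
  simp only [Finset.sum_sub_distrib, ite_mul, one_mul, zero_mul, Finset.sum_ite_eq,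
    Finset.mem_univ, if_true, ← Finset.mul_sum]
  have hc' : c ≠ 0 := ne_of_gt hcpos
  have hgoal : y i - 2 / c * (v i * ∑ j, v j * y j) = y i + v i := by
    have h2 : (∑ j, v j * y j) = -c / 2 := by linarith
    rw [h2]; field_simp; ring
  rw [hgoal]
  simp [hv]


section Instances

variable (ι : Type*) [Fintype ι] [DecidableEq ι]

instance : BorelSpace (Matrix ι ι ℝ) :=
  inferInstanceAs (BorelSpace (ι → ι → ℝ))

lemma orthogonalGroup_coe_inv (O : Matrix.orthogonalGroup ι ℝ) :
    ((O⁻¹ : Matrix.orthogonalGroup ι ℝ) : Matrix ι ι ℝ) = star (O : Matrix ι ι ℝ) := rfl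

instance : IsTopologicalGroup (Matrix.orthogonalGroup ι ℝ) where
  continuous_mul := by
    apply Continuous.subtype_mk
    exact (continuous_subtype_val.comp continuous_fst).matrix_mul
      (continuous_subtype_val.comp continuous_snd)
  continuous_inv := by
    apply Continuous.subtype_mk
    exact continuous_subtype_val.star

lemma orthogonalGroup_isClosed :
    IsClosed ((Matrix.orthogonalGroup ι ℝ : Submonoid (Matrix ι ι ℝ)) : Set (Matrix ι ι ℝ)) := by
  have : ((Matrix.orthogonalGroup ι ℝ : Submonoid (Matrix ι ι ℝ)) : Set (Matrix ι ι ℝ))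
      = (fun A : Matrix ι ι ℝ => A * star A) ⁻¹' {1} := by
    ext A
    simp only [Set.mem_preimage, Set.mem_singleton_iff, SetLike.mem_coe]
    exact Matrix.mem_orthogonalGroup_iff ι ℝ
  rw [this]
  exact isClosed_singleton.preimage (continuous_id.matrix_mul continuous_id.star)

instance : CompactSpace (Matrix.orthogonalGroup ι ℝ) := by
  apply isCompact_iff_compactSpace.mp
  have hbox : IsCompact {A : Matrix ι ι ℝ | ∀ i j, A i j ∈ Set.Icc (-1:ℝ) 1} := by
    have hset : {A : Matrix ι ι ℝ | ∀ i j, A i j ∈ Set.Icc (-1:ℝ) 1}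
        = Set.pi Set.univ (fun _ : ι => Set.pi Set.univ fun _ : ι => Set.Icc (-1:ℝ) 1) := by
      ext A
      constructor
      · intro h i _ j _
        exact h i j
      · intro h i j
        exact h i (Set.mem_univ i) j (Set.mem_univ j)
    rw [hset]
    exact isCompact_univ_pi fun _ : ι => isCompact_univ_pi fun _ : ι => isCompact_Icc
  apply IsCompact.of_isClosed_subset hbox (orthogonalGroup_isClosed ι)
  intro A hA
  have h1 : A * star A = 1 := (Matrix.mem_orthogonalGroup_iff ι ℝ).mp hA
  intro i j
  have hrow : ∑ k, A i k * A i k = 1 := by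
    have := congrArg (fun M => M i i) h1
    simpa [Matrix.mul_apply, Matrix.one_apply, Matrix.star_eq_conjTranspose,
      Matrix.conjTranspose_apply] using this
  have hle : A i j * A i j ≤ 1 := by
    have hsum : A i j * A i j ≤ ∑ k, A i k * A i k :=
      Finset.single_le_sum (f := fun k => A i k * A i k)
        (fun k _ => mul_self_nonneg _) (Finset.mem_univ j)
    linarith
  constructor <;> nlinarith [mul_self_nonneg (A i j)]

instance : SecondCountableTopology (Matrix ι ι ℝ) :=
  inferInstanceAs (SecondCountableTopology (ι → ι → ℝ))

instance : BorelSpace (Matrix.orthogonalGroup ι ℝ) :=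
  Subtype.borelSpace _

instance : SecondCountableTopology (Matrix.orthogonalGroup ι ℝ) :=
  Topology.IsEmbedding.secondCountableTopology Topology.IsEmbedding.subtypeVal

instance : LocallyCompactSpace (Matrix.orthogonalGroup ι ℝ) :=
  inferInstance

end Instances

section MainBound

variable {ι : Type*} [Fintype ι] [DecidableEq ι] [Nonempty ι]

local notation "V" => (ι → ℝ)
local notation "G" => Matrix.orthogonalGroup ι ℝ

lemma volume_map_orthogonal (O : G) (A : Set V) (hA : MeasurableSet A) :
    volume ((fun x : V => (O : Matrix ι ι ℝ) *ᵥ x) ⁻¹' A) = volume A := by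
  have hdet : ((O : Matrix ι ι ℝ).det) * ((O : Matrix ι ι ℝ).det) = 1 := by
    have h1 : (O : Matrix ι ι ℝ) * star (O : Matrix ι ι ℝ) = 1 :=
      (Matrix.mem_orthogonalGroup_iff ι ℝ).mp O.2
    have := congrArg Matrix.det h1
    rwa [Matrix.det_mul, Matrix.star_eq_conjTranspose,
      Matrix.conjTranspose_eq_transpose_of_trivial, Matrix.det_transpose,
      Matrix.det_one] at this
  have hdet0 : (O : Matrix ι ι ℝ).det ≠ 0 := by
    intro h; rw [h] at hdet; norm_num at hdet
  have habs : |((O : Matrix ι ι ℝ).det)⁻¹| = 1 := by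
    rcases mul_self_eq_one_iff.mp hdet with h | h <;> rw [h] <;> norm_num
  have hmap := Real.map_matrix_volume_pi_eq_smul_volume_pi hdet0
  have hfun : ⇑(Matrix.toLin' (O : Matrix ι ι ℝ)) = fun x : V => (O : Matrix ι ι ℝ) *ᵥ x := by
    funext x; exact Matrix.toLin'_apply _ _
  rw [hfun, habs] at hmap
  simp only [ENNReal.ofReal_one, one_smul] at hmap
  have hmeas : Measurable (fun x : V => (O : Matrix ι ι ℝ) *ᵥ x) :=
    (continuous_const.matrix_mulVec continuous_id).measurable
  calc volume ((fun x : V => (O : Matrix ι ι ℝ) *ᵥ x) ⁻¹' A)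
      = Measure.map (fun x : V => (O : Matrix ι ι ℝ) *ᵥ x) volume A :=
        (Measure.map_apply hmeas hA).symm
    _ = volume A := by rw [hmap]

lemma volume_ellipsoid_scale (b : ι → ℝ) (hb : ∀ i, 0 < b i) :
    volume {y : V | euclNorm (fun i => y i / b i) ≤ 1}
      = ENNReal.ofReal (∏ i, b i) * volume {y : V | euclNorm y ≤ 1} := by
  set M : Matrix ι ι ℝ := Matrix.diagonal fun i => (b i)⁻¹ with hM
  have hdet : M.det = ∏ i, (b i)⁻¹ := Matrix.det_diagonal
  have hdet0 : M.det ≠ 0 := by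
    rw [hdet]
    exact Finset.prod_ne_zero_iff.mpr fun i _ => inv_ne_zero (hb i).ne'
  have hmap := Real.map_matrix_volume_pi_eq_smul_volume_pi hdet0
  have hfun : ⇑(Matrix.toLin' M) = fun x : V => M *ᵥ x := by
    funext x; exact Matrix.toLin'_apply _ _
  have habs : |M.det⁻¹| = ∏ i, b i := by
    rw [hdet, ← Finset.prod_inv_distrib]
    simp only [inv_inv]
    rw [abs_of_pos (Finset.prod_pos fun i _ => hb i)]
  rw [hfun, habs] at hmap
  have hmeas : Measurable (fun x : V => M *ᵥ x) :=
    (continuous_const.matrix_mulVec continuous_id).measurable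
  have hball : MeasurableSet {y : V | euclNorm y ≤ 1} :=
    measurableSet_le Aux.continuous_euclNorm.measurable measurable_const
  have happ := congrArg (fun m : Measure V => m {y : V | euclNorm y ≤ 1}) hmap
  simp only [Measure.smul_apply, smul_eq_mul] at happ
  rw [Measure.map_apply hmeas hball] at happ
  have hpre : (fun x : V => M *ᵥ x) ⁻¹' {y : V | euclNorm y ≤ 1}
      = {y : V | euclNorm (fun i => y i / b i) ≤ 1} := by
    ext y
    simp only [Set.mem_preimage, Set.mem_setOf_eq]
    have : (M *ᵥ y) = fun i => y i / b i := by
      funext i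
      rw [hM, Matrix.mulVec_diagonal]
      exact (div_eq_inv_mul _ _).symm
    rw [this]
  rw [hpre] at happ
  exact happ

lemma volume_ball_pos_lt_top :
    0 < volume {y : V | euclNorm y ≤ 1} ∧ volume {y : V | euclNorm y ≤ 1} < ⊤ := by
  set n := Fintype.card ι with hn
  have hn1 : 1 ≤ n := Fintype.card_pos
  constructor
  · set c : ℝ := (n : ℝ)⁻¹ with hc
    have hcpos : 0 < c := by positivity
    have hsub : (Set.pi Set.univ fun _ : ι => Set.Ioo (-c) c) ⊆ {y : V | euclNorm y ≤ 1} := by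
      intro y hy
      simp only [Set.mem_pi, Set.mem_univ, forall_true_left, Set.mem_Ioo] at hy
      simp only [Set.mem_setOf_eq]
      rw [Aux.euclNorm_le_iff (by norm_num)]
      have hbound : ∀ i, y i ^ 2 ≤ c ^ 2 := fun i => by
        rcases hy i with ⟨h1, h2⟩
        nlinarith
      calc ∑ i, y i ^ 2 ≤ ∑ _i : ι, c ^ 2 := Finset.sum_le_sum fun i _ => hbound i
        _ = n * c ^ 2 := by rw [Finset.sum_const]; simp [hn, mul_comm]
        _ ≤ 1 ^ 2 := by
            rw [hc, one_pow]
            have h1 : (1:ℝ) ≤ (n:ℝ) := by exact_mod_cast hn1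
            have h2 : (0:ℝ) < (n:ℝ) := by linarith
            have h3 : (n:ℝ) * ((n:ℝ)⁻¹)^2 = (n:ℝ)⁻¹ := by field_simp
            rw [h3]
            have h4 : (n:ℝ)⁻¹ * (n:ℝ) = 1 := inv_mul_cancel₀ h2.ne'
            nlinarith [h4, inv_nonneg.mpr h2.le]
    have hbox : volume (Set.pi Set.univ fun _ : ι => Set.Ioo (-c) c)
        = ∏ _i : ι, ENNReal.ofReal (2 * c) := by
      rw [volume_pi_pi]
      congr 1
      funext i
      rw [Real.volume_Ioo]
      congr 1
      ring
    have : (0:ℝ≥0∞) < ∏ _i : ι, ENNReal.ofReal (2 * c) := by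
      rw [Finset.prod_const, pos_iff_ne_zero]
      exact pow_ne_zero _ (ENNReal.ofReal_pos.mpr (by positivity)).ne'
    calc (0:ℝ≥0∞) < ∏ _i : ι, ENNReal.ofReal (2 * c) := this
      _ = volume (Set.pi Set.univ fun _ : ι => Set.Ioo (-c) c) := hbox.symm
      _ ≤ volume {y : V | euclNorm y ≤ 1} := measure_mono hsub
  · have hsub : {y : V | euclNorm y ≤ 1} ⊆ Set.pi Set.univ fun _ : ι => Set.Icc (-1:ℝ) 1 := by
      intro y hy
      simp only [Set.mem_setOf_eq] at hy
      rw [Aux.euclNorm_le_iff (by norm_num)] at hy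
      intro i _
      have h1 : y i ^ 2 ≤ 1 := by
        have := Finset.single_le_sum (f := fun i => y i ^ 2)
          (fun i _ => sq_nonneg _) (Finset.mem_univ i)
        norm_num at hy
        linarith
      constructor <;> nlinarith
    calc volume {y : V | euclNorm y ≤ 1}
        ≤ volume (Set.pi Set.univ fun _ : ι => Set.Icc (-1:ℝ) 1) := measure_mono hsub
      _ = ∏ _i : ι, ENNReal.ofReal 2 := by
          rw [volume_pi_pi]
          congr 1; funext i; rw [Real.volume_Icc]; norm_num
      _ < ⊤ := by
          rw [Finset.prod_const]
          exact ENNReal.pow_lt_top ENNReal.ofReal_lt_top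


lemma haar_fubini (r : ℝ)
    (ν : Measure V) [SFinite ν] (A : Set V) (hA : MeasurableSet A)
    (hνinv : ∀ O : G, ν ((fun x : V => ((O⁻¹ : G) : Matrix ι ι ℝ) *ᵥ x) ⁻¹' A) = ν A) :
    (Measure.haar : Measure G) Set.univ * ν A
      = ∫⁻ x, (Measure.haar : Measure G) {O : G | ((O⁻¹ : G) : Matrix ι ι ℝ) *ᵥ x ∈ A} ∂ν := by
  set H : Measure G := Measure.haar with hH
  have hφcont : Continuous (fun p : G × V => ((p.1⁻¹ : G) : Matrix ι ι ℝ) *ᵥ p.2) := by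
    have h1 : Continuous (fun p : G × V => ((p.1⁻¹ : G) : Matrix ι ι ℝ)) :=
      (continuous_subtype_val.comp continuous_fst).star
    exact h1.matrix_mulVec continuous_snd
  have hφmeas : Measurable (fun p : G × V => ((p.1⁻¹ : G) : Matrix ι ι ℝ) *ᵥ p.2) :=
    hφcont.measurable
  have hT : MeasurableSet {p : G × V | ((p.1⁻¹ : G) : Matrix ι ι ℝ) *ᵥ p.2 ∈ A} := hφmeas hA
  calc H Set.univ * ν A = ν A * H Set.univ := mul_comm _ _
    _ = ∫⁻ _O : G, ν A ∂H := (lintegral_const _).symm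
    _ = ∫⁻ O : G, ν (Prod.mk O ⁻¹' {p : G × V | ((p.1⁻¹ : G) : Matrix ι ι ℝ) *ᵥ p.2 ∈ A}) ∂H := by
        apply lintegral_congr
        intro O
        exact (hνinv O).symm
    _ = (H.prod ν) {p : G × V | ((p.1⁻¹ : G) : Matrix ι ι ℝ) *ᵥ p.2 ∈ A} :=
        (Measure.prod_apply hT).symm
    _ = ∫⁻ x, H ((fun O : G => (O, x)) ⁻¹' {p : G × V | ((p.1⁻¹ : G) : Matrix ι ι ℝ) *ᵥ p.2 ∈ A}) ∂ν :=
        Measure.prod_apply_symm hT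
    _ = ∫⁻ x, H {O : G | ((O⁻¹ : G) : Matrix ι ι ℝ) *ᵥ x ∈ A} ∂ν := rfl

lemma main_measure_bound (r : ℝ) (hr : 0 < r)
    (μ : Measure V) [IsProbabilityMeasure μ]
    (hsupp : μ {x : V | euclNorm x ≠ r} = 0)
    (hinv : ∀ O : G, Measure.map (fun x : V => (O : Matrix ι ι ℝ) *ᵥ x) μ = μ)
    (S : Set V) (hS : MeasurableSet S)
    (b : ι → ℝ) (hb : ∀ i, 0 < b i)
    (hcone : ∀ y : V, 0 < euclNorm y → euclNorm y ≤ r →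
      (fun i => (r / euclNorm y) * y i) ∈ S → ∑ i, (y i / b i) ^ 2 ≤ 1) :
    μ S ≤ ENNReal.ofReal ((∏ i, b i) / r ^ (Fintype.card ι)) := by
  classical
  set H : Measure G := Measure.haar with hH
  set κ : Set V → V → ℝ≥0∞ :=
    fun A x => H {O : G | ((O⁻¹ : G) : Matrix ι ι ℝ) *ᵥ x ∈ A} with hκ
  have hmulmeas : ∀ M : Matrix ι ι ℝ, Measurable (fun x : V => M *ᵥ x) := fun M =>
    (continuous_const.matrix_mulVec continuous_id).measurable
  -- κ is invariant under the orthogonal action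
  have hκU : ∀ (A : Set V) (U : G) (x : V),
      κ A ((U : Matrix ι ι ℝ) *ᵥ x) = κ A x := by
    intro A U x
    have hset : {O : G | ((O⁻¹ : G) : Matrix ι ι ℝ) *ᵥ ((U : Matrix ι ι ℝ) *ᵥ x) ∈ A}
        = (fun O : G => U⁻¹ * O) ⁻¹' {O : G | ((O⁻¹ : G) : Matrix ι ι ℝ) *ᵥ x ∈ A} := by
      ext O
      simp only [Set.mem_setOf_eq, Set.mem_preimage]
      have heq : ((O⁻¹ : G) : Matrix ι ι ℝ) *ᵥ ((U : Matrix ι ι ℝ) *ᵥ x)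
          = (((U⁻¹ * O)⁻¹ : G) : Matrix ι ι ℝ) *ᵥ x := by
        rw [Matrix.mulVec_mulVec]
        have hOU : ((U⁻¹ * O)⁻¹ : G) = O⁻¹ * U := by
          rw [_root_.mul_inv_rev, inv_inv]
        rw [hOU]
        rfl
      rw [heq]
    simp only [hκ]
    rw [hset]
    exact measure_preimage_mul H (U⁻¹) _
  -- κ is constant on the sphere
  have hκsphere : ∀ (A : Set V) (x y : V), euclNorm x = r → euclNorm y = r →
      κ A x = κ A y := by
    intro A x y hx hy
    obtain ⟨U, hU⟩ := Aux.exists_orthogonal_mulVec x y (by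
      have h1 := (Aux.euclNorm_eq_iff hr.le).mp hx
      have h2 := (Aux.euclNorm_eq_iff hr.le).mp hy
      rw [h1, h2])
    rw [← hU]
    exact hκU A U y
  -- a base point on the sphere
  obtain ⟨i₀⟩ := (inferInstance : Nonempty ι)
  set x₀ : V := fun i => if i = i₀ then r else 0 with hx₀
  have hx₀norm : euclNorm x₀ = r := by
    rw [Aux.euclNorm_eq_iff hr.le]
    have hterm : ∀ i, x₀ i ^ 2 = if i = i₀ then r ^ 2 else 0 := by
      intro i; by_cases h : i = i₀ <;> simp [hx₀, h]
    rw [Finset.sum_congr rfl fun i _ => hterm i]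
    simp
  set h₀ : ℝ≥0∞ := κ S x₀ with hh₀
  -- invariance of μ
  have hμinv : ∀ O : G, μ ((fun x : V => ((O⁻¹ : G) : Matrix ι ι ℝ) *ᵥ x) ⁻¹' S) = μ S := by
    intro O
    conv_rhs => rw [← hinv O⁻¹]
    rw [Measure.map_apply (hmulmeas _) hS]
  -- the μ-side computation
  have hμS : H Set.univ * μ S = h₀ := by
    rw [haar_fubini r μ S hS hμinv]
    have hcongr : ∫⁻ x, κ S x ∂μ = ∫⁻ _x, h₀ ∂μ := by
      apply lintegral_congr_ae
      have hae : ∀ᵐ x ∂μ, euclNorm x = r := by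
        rw [ae_iff]
        exact hsupp
      filter_upwards [hae] with x hx
      exact hκsphere S x x₀ hx hx₀norm
    show ∫⁻ x, κ S x ∂μ = h₀
    rw [hcongr, lintegral_const, measure_univ, mul_one]
  -- the cone over S
  set C : Set V := {y : V | 0 < euclNorm y ∧ euclNorm y ≤ r ∧
      (fun i => (r / euclNorm y) * y i) ∈ S} with hC
  have hg : Measurable (fun y : V => (fun i => (r / euclNorm y) * y i)) := by
    apply measurable_pi_lambda
    intro i
    exact (measurable_const.div Aux.continuous_euclNorm.measurable).mul (measurable_pi_apply i)
  have hCmeas : MeasurableSet C := by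
    rw [hC]
    rw [Set.setOf_and, Set.setOf_and]
    exact (measurableSet_lt measurable_const Aux.continuous_euclNorm.measurable).inter
      ((measurableSet_le Aux.continuous_euclNorm.measurable measurable_const).inter (hg hS))
  -- κ of the cone
  have hκC : ∀ y : V, κ C y
      = Set.indicator {y : V | 0 < euclNorm y ∧ euclNorm y ≤ r} (fun _ => h₀) y := by
    intro y
    by_cases hy : 0 < euclNorm y ∧ euclNorm y ≤ r
    · rw [Set.indicator_of_mem
        (show y ∈ {y : V | 0 < euclNorm y ∧ euclNorm y ≤ r} from hy)]
      set c : ℝ := r / euclNorm y with hcdef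
      have hcpos : 0 < c := div_pos hr hy.1
      set z : V := fun i => c * y i with hz
      have hznorm : euclNorm z = r := by
        rw [hz, Aux.euclNorm_smul c hcpos.le, hcdef, div_mul_cancel₀]
        exact hy.1.ne'
      have hzs : z = c • y := by funext i; simp [hz]
      have hsetz : {O : G | ((O⁻¹ : G) : Matrix ι ι ℝ) *ᵥ y ∈ C}
          = {O : G | ((O⁻¹ : G) : Matrix ι ι ℝ) *ᵥ z ∈ S} := by
        ext O
        simp only [Set.mem_setOf_eq, hC]
        have hnorm : euclNorm (((O⁻¹ : G) : Matrix ι ι ℝ) *ᵥ y) = euclNorm y :=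
          Aux.euclNorm_mulVec _ _
        have hscale : (fun i => (r / euclNorm (((O⁻¹ : G) : Matrix ι ι ℝ) *ᵥ y))
              * (((O⁻¹ : G) : Matrix ι ι ℝ) *ᵥ y) i)
            = ((O⁻¹ : G) : Matrix ι ι ℝ) *ᵥ z := by
          rw [hzs, Matrix.mulVec_smul]
          funext i
          rw [hnorm]
          simp [hcdef]
        constructor
        · rintro ⟨-, -, hmem⟩
          rwa [hscale] at hmem
        · intro hmem
          refine ⟨by rw [hnorm]; exact hy.1, by rw [hnorm]; exact hy.2, ?_⟩
          rwa [hscale]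
      simp only [hκ]
      rw [hsetz]
      exact hκsphere S z x₀ hznorm hx₀norm
    · rw [Set.indicator_of_notMem
        (show y ∉ {y : V | 0 < euclNorm y ∧ euclNorm y ≤ r} from hy)]
      have hempty : {O : G | ((O⁻¹ : G) : Matrix ι ι ℝ) *ᵥ y ∈ C} = ∅ := by
        ext O
        simp only [Set.mem_setOf_eq, Set.mem_empty_iff_false, iff_false, hC]
        rintro ⟨h1, h2, -⟩
        rw [Aux.euclNorm_mulVec (O⁻¹) y] at h1 h2
        exact hy ⟨h1, h2⟩
      simp only [hκ]
      rw [hempty, measure_empty]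
  -- volume of the origin / ball facts
  have hvol0 : volume ({(0 : V)} : Set V) = 0 := by
    have hsub : ({(0 : V)} : Set V) ⊆ Set.pi Set.univ fun _ : ι => ({0} : Set ℝ) := by
      intro y hy
      rw [Set.mem_singleton_iff] at hy
      subst hy
      intro i _
      rfl
    refine measure_mono_null hsub ?_
    rw [volume_pi_pi]
    exact Finset.prod_eq_zero (Finset.mem_univ i₀) Real.volume_singleton
  have hballsplit : volume {y : V | 0 < euclNorm y ∧ euclNorm y ≤ r}
      = volume {y : V | euclNorm y ≤ r} := by
    apply le_antisymm (measure_mono fun y hy => hy.2)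
    have hsub : {y : V | euclNorm y ≤ r}
        ⊆ {y : V | 0 < euclNorm y ∧ euclNorm y ≤ r} ∪ {(0 : V)} := by
      intro y hy
      by_cases h0 : 0 < euclNorm y
      · exact Or.inl ⟨h0, hy⟩
      · right
        rw [Set.mem_singleton_iff]
        by_contra hne
        exact h0 (Aux.euclNorm_pos_iff.mpr hne)
    calc volume {y : V | euclNorm y ≤ r}
        ≤ volume ({y : V | 0 < euclNorm y ∧ euclNorm y ≤ r} ∪ {(0 : V)}) := measure_mono hsub
      _ ≤ volume {y : V | 0 < euclNorm y ∧ euclNorm y ≤ r} + volume ({(0 : V)} : Set V) :=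
          measure_union_le _ _
      _ = volume {y : V | 0 < euclNorm y ∧ euclNorm y ≤ r} := by rw [hvol0, add_zero]
  -- the volume-side computation
  have hvolC : H Set.univ * volume C = h₀ * volume {y : V | euclNorm y ≤ r} := by
    rw [haar_fubini r volume C hCmeas (fun O => volume_map_orthogonal (O⁻¹) C hCmeas)]
    have hcongr : ∫⁻ y, κ C y ∂volume
        = ∫⁻ y, Set.indicator {y : V | 0 < euclNorm y ∧ euclNorm y ≤ r} (fun _ => h₀) y ∂volume :=
      lintegral_congr hκC
    show ∫⁻ y, κ C y ∂volume = h₀ * volume {y : V | euclNorm y ≤ r}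
    rw [hcongr]
    have hmeas2 : MeasurableSet {y : V | 0 < euclNorm y ∧ euclNorm y ≤ r} := by
      rw [Set.setOf_and]
      exact (measurableSet_lt measurable_const Aux.continuous_euclNorm.measurable).inter
        (measurableSet_le Aux.continuous_euclNorm.measurable measurable_const)
    rw [lintegral_indicator hmeas2, setLIntegral_const, hballsplit]
  -- cancel the Haar mass
  have hHuniv0 : H Set.univ ≠ 0 :=
    isOpen_univ.measure_ne_zero H Set.univ_nonempty
  have hHunivtop : H Set.univ ≠ ⊤ := measure_ne_top H _
  have hkey2 : μ S * volume {y : V | euclNorm y ≤ r} = volume C := by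
    have e1 : H Set.univ * (μ S * volume {y : V | euclNorm y ≤ r})
        = H Set.univ * volume C := by
      rw [← mul_assoc, hμS, hvolC]
    exact (ENNReal.mul_right_inj hHuniv0 hHunivtop).mp e1
  -- the cone is inside the ellipsoid
  have hCE : C ⊆ {y : V | euclNorm (fun i => y i / b i) ≤ 1} := by
    rintro y ⟨h1, h2, h3⟩
    simp only [Set.mem_setOf_eq]
    rw [Aux.euclNorm_le_iff (by norm_num : (0:ℝ) ≤ 1)]
    simpa using hcone y h1 h2 h3
  -- volumes of ellipsoid and balls
  have hEvol : volume {y : V | euclNorm (fun i => y i / b i) ≤ 1}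
      = ENNReal.ofReal (∏ i, b i) * volume {y : V | euclNorm y ≤ 1} :=
    volume_ellipsoid_scale b hb
  have hBall_r : volume {y : V | euclNorm y ≤ r}
      = ENNReal.ofReal (r ^ (Fintype.card ι)) * volume {y : V | euclNorm y ≤ 1} := by
    have h1 := volume_ellipsoid_scale (fun _ : ι => r) (fun _ => hr)
    have hseteq : {y : V | euclNorm (fun i => y i / r) ≤ 1} = {y : V | euclNorm y ≤ r} := by
      ext y
      simp only [Set.mem_setOf_eq]
      rw [Aux.euclNorm_le_iff (by norm_num : (0:ℝ) ≤ 1), Aux.euclNorm_le_iff hr.le]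
      have hsum : ∑ i, (y i / r) ^ 2 = (∑ i, y i ^ 2) / r ^ 2 := by
        rw [Finset.sum_div]
        exact Finset.sum_congr rfl fun i _ => div_pow _ _ _
      rw [hsum, one_pow]
      rw [div_le_one (by positivity)]
    have hprod : (∏ _i : ι, r) = r ^ (Fintype.card ι) := by
      rw [Finset.prod_const, Finset.card_univ]
    rw [hseteq, hprod] at h1
    exact h1
  -- combine everything
  set volB1 : ℝ≥0∞ := volume {y : V | euclNorm y ≤ 1} with hvolB1
  obtain ⟨hB1pos, hB1top⟩ := volume_ball_pos_lt_top (ι := ι)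
  rw [← hvolB1] at hB1pos hB1top
  have hfinal : μ S * ENNReal.ofReal (r ^ (Fintype.card ι)) ≤ ENNReal.ofReal (∏ i, b i) := by
    have h1 : μ S * (ENNReal.ofReal (r ^ (Fintype.card ι)) * volB1)
        ≤ ENNReal.ofReal (∏ i, b i) * volB1 := by
      calc μ S * (ENNReal.ofReal (r ^ (Fintype.card ι)) * volB1)
          = μ S * volume {y : V | euclNorm y ≤ r} := by rw [hBall_r]
        _ = volume C := hkey2
        _ ≤ volume {y : V | euclNorm (fun i => y i / b i) ≤ 1} := measure_mono hCE
        _ = ENNReal.ofReal (∏ i, b i) * volB1 := hEvol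
    rw [← mul_assoc] at h1
    exact (ENNReal.mul_le_mul_iff_left hB1pos.ne' hB1top.ne).mp h1
  have hrpow : (0:ℝ) < r ^ (Fintype.card ι) := pow_pos hr _
  have h2 : ENNReal.ofReal (∏ i, b i)
      = ENNReal.ofReal ((∏ i, b i) / r ^ (Fintype.card ι)) * ENNReal.ofReal (r ^ (Fintype.card ι)) := by
    rw [← ENNReal.ofReal_mul
        (div_nonneg (Finset.prod_nonneg fun i _ => (hb i).le) hrpow.le),
      div_mul_cancel₀ _ hrpow.ne']
  rw [h2] at hfinal
  exact (ENNReal.mul_le_mul_iff_left (ENNReal.ofReal_pos.mpr hrpow).ne' ENNReal.ofReal_ne_top).mp hfinal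

end MainBound

section Algebra

/-- `N^(2N-2) ≤ N² (N-1)^(2N-2)` for `N ≥ 1`. -/
lemma pow_ineq (N : ℕ) (hN : 1 ≤ N) :
    ((N : ℝ)) ^ (2 * N - 2) ≤ (N : ℝ) ^ 2 * ((N : ℝ) - 1) ^ (2 * N - 2) := by
  rcases Nat.lt_or_ge N 3 with h3 | h3
  · interval_cases N <;> norm_num
  · set m : ℕ := N - 1 with hm
    have hm2 : 2 ≤ m := by omega
    have hexp : 2 * N - 2 = 2 * m := by omega
    have hstep : ((N : ℝ)) = (m : ℝ) + 1 := by
      have : N = m + 1 := by omega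
      rw [this]; push_cast; ring
    rw [hexp, hstep]
    have hmr : (0:ℝ) < (m:ℝ) := by
      have : (2:ℝ) ≤ (m:ℝ) := by exact_mod_cast hm2
      linarith
    have h1 : ((m:ℝ) + 1) ^ (2 * m) ≤ Real.exp 2 * (m:ℝ) ^ (2 * m) := by
      have hh : ((m:ℝ) + 1) ≤ Real.exp (1 / (m:ℝ)) * (m:ℝ) := by
        have he := Real.add_one_le_exp (1 / (m:ℝ))
        have hcalc : (1 / (m:ℝ) + 1) * (m:ℝ) = (m:ℝ) + 1 := by field_simp; ring
        nlinarith [he, hmr]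
      calc ((m:ℝ) + 1) ^ (2 * m) ≤ (Real.exp (1 / (m:ℝ)) * (m:ℝ)) ^ (2 * m) :=
            pow_le_pow_left₀ (by positivity) hh _
        _ = (Real.exp (1 / (m:ℝ))) ^ (2 * m) * (m:ℝ) ^ (2 * m) := mul_pow _ _ _
        _ = Real.exp 2 * (m:ℝ) ^ (2 * m) := by
            rw [← Real.exp_nat_mul]
            congr 1
            push_cast
            field_simp
    have h2 : Real.exp 2 ≤ ((m:ℝ) + 1) ^ 2 := by
      have he1 : Real.exp 1 < 3 := by
        have := Real.exp_one_lt_d9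
        norm_num at this
        linarith
      have he2 : Real.exp 2 = Real.exp 1 * Real.exp 1 := by
        rw [← Real.exp_add]; norm_num
      have hm3 : (3:ℝ) ≤ (m:ℝ) + 1 := by
        have : (2:ℝ) ≤ (m:ℝ) := by exact_mod_cast hm2
        linarith
      nlinarith [Real.exp_pos 1]
    calc ((m:ℝ) + 1) ^ (2 * m) ≤ Real.exp 2 * (m:ℝ) ^ (2 * m) := h1
      _ ≤ ((m:ℝ) + 1) ^ 2 * (m:ℝ) ^ (2 * m) :=
          mul_le_mul_of_nonneg_right h2 (by positivity)
      _ = ((m:ℝ) + 1) ^ 2 * ((m:ℝ) + 1 - 1) ^ (2 * m) := by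
          norm_num

lemma prod_sqrt_sq {ι : Type*} [Fintype ι] (f : ι → ℝ) (hf : ∀ i, 0 ≤ f i) :
    (∏ i, Real.sqrt (f i)) ^ 2 = ∏ i, f i := by
  rw [← Finset.prod_pow]
  exact Finset.prod_congr rfl fun i _ => Real.sq_sqrt (hf i)


lemma caseB_key (N : ℕ) (hN : 1 ≤ N) (d : Fin N ⊕ Fin N → ℝ) (hd : ∀ i, 0 < d i)
    (dmin : ℝ) (hdminpos : 0 < dmin) (a : Fin N)
    (ha1 : d (Sum.inl a) = dmin) (ha2 : d (Sum.inr a) = dmin)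
    (r β : ℝ) (hr : 0 < r) (hβ : 0 < β) (hcase : (N:ℝ)^2 * dmin * r^2 ≤ β) :
    (N:ℝ)^(2*N-2) * β * (r^(2*N-1))^2 * ∏ i, d i
      ≤ dmin * ∏ i, (β + ((N:ℝ)-1) * d i * r^2) := by
  classical
  have hN1 : (1:ℝ) ≤ (N:ℝ) := by exact_mod_cast hN
  have hNm1 : (0:ℝ) ≤ (N:ℝ) - 1 := by linarith
  have hcard : Fintype.card (Fin N ⊕ Fin N) = 2 * N := by
    simp [Fintype.card_sum]
    omega
  have hmem2 : Sum.inr a ∈ Finset.univ.erase (Sum.inl a) := by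
    rw [Finset.mem_erase]
    exact ⟨by simp, Finset.mem_univ _⟩
  set R : Finset (Fin N ⊕ Fin N) := (Finset.univ.erase (Sum.inl a)).erase (Sum.inr a) with hR
  have hcardR : R.card = 2*N - 2 := by
    rw [hR, Finset.card_erase_of_mem hmem2, Finset.card_erase_of_mem (Finset.mem_univ _),
      Finset.card_univ, hcard]
    omega
  have hprod_d : ∏ i, d i = dmin * (dmin * ∏ i ∈ R, d i) := by
    rw [← Finset.mul_prod_erase _ _ (Finset.mem_univ (Sum.inl a)),
      ← Finset.mul_prod_erase _ _ hmem2, ha1, ha2]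
  have hprodK : ∏ i, (β + ((N:ℝ)-1) * d i * r^2)
      = (β + ((N:ℝ)-1) * dmin * r^2) * ((β + ((N:ℝ)-1) * dmin * r^2)
        * ∏ i ∈ R, (β + ((N:ℝ)-1) * d i * r^2)) := by
    rw [← Finset.mul_prod_erase _ _ (Finset.mem_univ (Sum.inl a)),
      ← Finset.mul_prod_erase _ _ hmem2, ha1, ha2]
  have hRd_nonneg : (0:ℝ) ≤ ∏ i ∈ R, d i :=
    Finset.prod_nonneg fun i _ => (hd i).le
  have e1 : (2*N-1)*2 = 2 + 2*(2*N-2) := by omega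
  have hrpow : (r^(2*N-1))^2 = r^2 * (r^2)^(2*N-2) := by
    rw [← pow_mul, ← pow_mul, ← pow_add, e1]
  have hprodc : ∏ i ∈ R, (((N:ℝ)-1) * d i * r^2)
      = (((N:ℝ)-1)*r^2)^(2*N-2) * ∏ i ∈ R, d i := by
    rw [Finset.prod_congr rfl
      (fun i _ => (by ring : ((N:ℝ)-1) * d i * r^2 = (((N:ℝ)-1)*r^2) * d i)),
      Finset.prod_mul_distrib, Finset.prod_const, hcardR]
  have hcore : (N:ℝ)^(2*N-2) * β * r^2 * dmin^2
      ≤ dmin * β^2 * ((N:ℝ)-1)^(2*N-2) := by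
    have hpw := pow_ineq N hN
    have h1 : (N:ℝ)^(2*N-2) * (β * r^2 * dmin^2)
        ≤ (N:ℝ)^2*((N:ℝ)-1)^(2*N-2) * (β * r^2 * dmin^2) :=
      mul_le_mul_of_nonneg_right hpw (by positivity)
    have h3 : ((N:ℝ)^2*dmin*r^2) * (β * dmin * ((N:ℝ)-1)^(2*N-2))
        ≤ β * (β * dmin * ((N:ℝ)-1)^(2*N-2)) :=
      mul_le_mul_of_nonneg_right hcase (by positivity)
    calc (N:ℝ)^(2*N-2) * β * r^2 * dmin^2
        = (N:ℝ)^(2*N-2) * (β * r^2 * dmin^2) := by ring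
      _ ≤ (N:ℝ)^2*((N:ℝ)-1)^(2*N-2) * (β * r^2 * dmin^2) := h1
      _ = ((N:ℝ)^2*dmin*r^2) * (β * dmin * ((N:ℝ)-1)^(2*N-2)) := by ring
      _ ≤ β * (β * dmin * ((N:ℝ)-1)^(2*N-2)) := h3
      _ = dmin * β^2 * ((N:ℝ)-1)^(2*N-2) := by ring
  have hprodR_le : ∏ i ∈ R, (((N:ℝ)-1) * d i * r^2)
      ≤ ∏ i ∈ R, (β + ((N:ℝ)-1) * d i * r^2) := by
    apply Finset.prod_le_prod
    · intro i _
      have := (hd i).le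
      positivity
    · intro i _
      nlinarith [hβ, (hd i).le]
  have hβleK : β ≤ β + ((N:ℝ)-1) * dmin * r^2 := by
    nlinarith [mul_nonneg (mul_nonneg hNm1 hdminpos.le) (sq_nonneg r)]
  calc (N:ℝ)^(2*N-2) * β * (r^(2*N-1))^2 * ∏ i, d i
      = ((N:ℝ)^(2*N-2) * β * r^2 * dmin^2) * ((r^2)^(2*N-2) * ∏ i ∈ R, d i) := by
        rw [hprod_d, hrpow]; ring
    _ ≤ (dmin * β^2 * ((N:ℝ)-1)^(2*N-2)) * ((r^2)^(2*N-2) * ∏ i ∈ R, d i) :=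
        mul_le_mul_of_nonneg_right hcore (by positivity)
    _ = dmin * (β * (β * ((((N:ℝ)-1)*r^2)^(2*N-2) * ∏ i ∈ R, d i))) := by
        rw [mul_pow]; ring
    _ = dmin * (β * (β * ∏ i ∈ R, (((N:ℝ)-1) * d i * r^2))) := by rw [hprodc]
    _ ≤ dmin * ((β + ((N:ℝ)-1) * dmin * r^2) * ((β + ((N:ℝ)-1) * dmin * r^2)
          * ∏ i ∈ R, (β + ((N:ℝ)-1) * d i * r^2))) := by
        have hKnn : (0:ℝ) ≤ β + ((N:ℝ)-1) * dmin * r^2 := by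
          nlinarith [mul_nonneg (mul_nonneg hNm1 hdminpos.le) (sq_nonneg r)]
        have hprodRnn : (0:ℝ) ≤ ∏ i ∈ R, (((N:ℝ)-1) * d i * r^2) :=
          Finset.prod_nonneg fun i _ =>
            mul_nonneg (mul_nonneg hNm1 (hd i).le) (sq_nonneg r)
        apply mul_le_mul_of_nonneg_left _ hdminpos.le
        apply mul_le_mul hβleK _ (mul_nonneg hβ.le hprodRnn) hKnn
        apply mul_le_mul hβleK hprodR_le hprodRnn hKnn
    _ = dmin * ∏ i, (β + ((N:ℝ)-1) * d i * r^2) := by rw [← hprodK]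

end Algebra

end Aux

/-- if `o` is uniformly distributed (i.e. its law is the
rotation-invariant probability measure) on the sphere of radius `r` in `ℝ^{2N}`,
and `D = diag d` with positive paired diagonal entries, then for every `β > 0`,
`P(‖D^{1/2} o‖ < √β) ≤ (2N β^{N−1/2}) / (r^{2N−1} (∏ √dᵢ) (2/√d_min))`. -/
theorem statement_9 (N : ℕ) (hN : 1 ≤ N)
    (d : Fin N ⊕ Fin N → ℝ) (hd : ∀ i, 0 < d i)
    (hpair : ∀ i : Fin N, d (Sum.inl i) = d (Sum.inr i))
    (dmin : ℝ) (hdmin : IsLeast (Set.range d) dmin)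
    (r : ℝ) (hr : 0 < r)
    (μ : Measure (Fin N ⊕ Fin N → ℝ)) [IsProbabilityMeasure μ]
    (hsupp : μ {x | euclNorm x ≠ r} = 0)
    (hinv : ∀ O : Matrix.orthogonalGroup (Fin N ⊕ Fin N) ℝ,
      Measure.map (fun x => (O : Matrix (Fin N ⊕ Fin N) (Fin N ⊕ Fin N) ℝ) *ᵥ x) μ = μ) :
    ∀ β : ℝ, 0 < β →
      μ {x | euclNorm (fun i => Real.sqrt (d i) * x i) < Real.sqrt β}
        ≤ ENNReal.ofReal ((2 * N * β ^ ((N : ℝ) - 1 / 2)) /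
            (r ^ (2 * N - 1) * (∏ i, Real.sqrt (d i)) * (2 / Real.sqrt dmin))) := by
  intro β hβ
  classical
  haveI : Nonempty (Fin N ⊕ Fin N) := ⟨Sum.inl ⟨0, hN⟩⟩
  have hNR : (0:ℝ) < (N:ℝ) := by
    have : 0 < N := hN
    exact_mod_cast this
  obtain ⟨j, hj⟩ := hdmin.1
  have hdminpos : 0 < dmin := hj ▸ hd j
  obtain ⟨a, ha1, ha2⟩ : ∃ a : Fin N, d (Sum.inl a) = dmin ∧ d (Sum.inr a) = dmin := by
    cases j with
    | inl a => exact ⟨a, hj, by rw [← hpair a]; exact hj⟩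
    | inr a => exact ⟨a, by rw [hpair a]; exact hj, hj⟩
  set P : ℝ := ∏ i, Real.sqrt (d i) with hP
  have hPpos : 0 < P := Finset.prod_pos fun i _ => Real.sqrt_pos.mpr (hd i)
  have hcard : Fintype.card (Fin N ⊕ Fin N) = 2 * N := by
    simp [Fintype.card_sum]
    omega
  have hsβ : 0 < Real.sqrt β := Real.sqrt_pos.mpr hβ
  have hsdmin : 0 < Real.sqrt dmin := Real.sqrt_pos.mpr hdminpos
  -- simplification of the right-hand side
  have hRHS : (2 * (N:ℝ) * β ^ ((N : ℝ) - 1 / 2)) /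
      (r ^ (2 * N - 1) * P * (2 / Real.sqrt dmin))
      = (N:ℝ) * β ^ N * Real.sqrt dmin / (Real.sqrt β * (r ^ (2 * N - 1) * P)) := by
    have h1 : β ^ ((N : ℝ) - 1 / 2) = β ^ N / Real.sqrt β := by
      rw [Real.rpow_sub hβ, Real.rpow_natCast]
      congr 1
      rw [Real.sqrt_eq_rpow]
    rw [h1]
    have hrp : (0:ℝ) < r ^ (2*N-1) := pow_pos hr _
    field_simp
  -- the target set, intersected with the sphere
  set T : Set (Fin N ⊕ Fin N → ℝ) :=
    {x | euclNorm (fun i => Real.sqrt (d i) * x i) < Real.sqrt β} with hT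
  set Sph : Set (Fin N ⊕ Fin N → ℝ) := {x | euclNorm x = r} with hSph
  have hmeas_map : Measurable fun (x : Fin N ⊕ Fin N → ℝ) =>
      (fun i => Real.sqrt (d i) * x i) :=
    measurable_pi_lambda _ fun i => measurable_const.mul (measurable_pi_apply i)
  have hTmeas : MeasurableSet T :=
    measurableSet_lt (Aux.continuous_euclNorm.measurable.comp hmeas_map) measurable_const
  have hSphmeas : MeasurableSet Sph :=
    Aux.continuous_euclNorm.measurable (measurableSet_singleton r)
  set S : Set (Fin N ⊕ Fin N → ℝ) := T ∩ Sph with hS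
  have hSmeas : MeasurableSet S := hTmeas.inter hSphmeas
  have hTle : μ T ≤ μ S := by
    have hsub : T ⊆ S ∪ {x | euclNorm x ≠ r} := by
      intro x hx
      by_cases hxr : euclNorm x = r
      · exact Or.inl ⟨hx, hxr⟩
      · exact Or.inr hxr
    calc μ T ≤ μ (S ∪ {x | euclNorm x ≠ r}) := measure_mono hsub
      _ ≤ μ S + μ {x | euclNorm x ≠ r} := measure_union_le _ _
      _ = μ S := by rw [hsupp, add_zero]
  -- consequences of being in the cone over S
  have hcone_core : ∀ y : Fin N ⊕ Fin N → ℝ, 0 < euclNorm y → euclNorm y ≤ r →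
      (fun i => (r / euclNorm y) * y i) ∈ S →
      (∑ i, d i * y i ^ 2 ≤ β ∧ ∑ i, y i ^ 2 ≤ r ^ 2) := by
    intro y h1 h2 h3
    have hy2 : ∑ i, y i ^ 2 ≤ r ^ 2 := (Aux.euclNorm_le_iff hr.le).mp h2
    obtain ⟨hmem, -⟩ := h3
    rw [hT, Set.mem_setOf_eq] at hmem
    rw [Aux.euclNorm_lt_iff (Real.sqrt_nonneg β), Real.sq_sqrt hβ.le] at hmem
    have hterm : ∀ i, (Real.sqrt (d i) * ((r / euclNorm y) * y i)) ^ 2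
        = (r / euclNorm y) ^ 2 * (d i * y i ^ 2) := by
      intro i
      rw [mul_pow, mul_pow, Real.sq_sqrt (hd i).le]
      ring
    rw [Finset.sum_congr rfl fun i _ => hterm i, ← Finset.mul_sum] at hmem
    have hge1 : (1:ℝ) ≤ r / euclNorm y := (one_le_div h1).mpr h2
    have hdsum_nonneg : (0:ℝ) ≤ ∑ i, d i * y i ^ 2 :=
      Finset.sum_nonneg fun i _ => mul_nonneg (hd i).le (sq_nonneg _)
    refine ⟨?_, hy2⟩
    have hge2 : (1:ℝ) ≤ (r / euclNorm y)^2 := by nlinarith [hge1]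
    nlinarith [hmem, mul_le_mul_of_nonneg_right hge2 hdsum_nonneg]
  by_cases hcase : β ≤ (N:ℝ)^2 * dmin * r^2
  · -- Case A : small β, use the plain ellipsoid bound
    set b : (Fin N ⊕ Fin N) → ℝ := fun i => Real.sqrt (β / d i) with hb
    have hbpos : ∀ i, 0 < b i := fun i => Real.sqrt_pos.mpr (div_pos hβ (hd i))
    have hcone : ∀ y : Fin N ⊕ Fin N → ℝ, 0 < euclNorm y → euclNorm y ≤ r →
        (fun i => (r / euclNorm y) * y i) ∈ S → ∑ i, (y i / b i) ^ 2 ≤ 1 := by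
      intro y h1 h2 h3
      obtain ⟨hdy, -⟩ := hcone_core y h1 h2 h3
      have hterm : ∀ i, (y i / b i) ^ 2 = d i * y i ^ 2 / β := by
        intro i
        simp only [hb]
        rw [div_pow, Real.sq_sqrt (div_nonneg hβ.le (hd i).le), div_div_eq_mul_div]
        ring
      rw [Finset.sum_congr rfl fun i _ => hterm i, ← Finset.sum_div, div_le_one hβ]
      exact hdy
    have hbound := Aux.main_measure_bound r hr μ hsupp hinv S hSmeas b hbpos hcone
    have hprodA : ∏ i, b i = β ^ N / P := by
      have h1 : ∀ i : Fin N ⊕ Fin N, Real.sqrt (β / d i)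
          = Real.sqrt β / Real.sqrt (d i) := fun i => Real.sqrt_div hβ.le _
      simp only [hb]
      rw [Finset.prod_congr rfl fun i _ => h1 i, Finset.prod_div_distrib,
        Finset.prod_const, Finset.card_univ, hcard, pow_mul, Real.sq_sqrt hβ.le, ← hP]
    have key : Real.sqrt β ≤ (N:ℝ) * Real.sqrt dmin * r := by
      have h1 : Real.sqrt β ≤ Real.sqrt ((N:ℝ)^2 * dmin * r^2) := Real.sqrt_le_sqrt hcase
      have h2 : Real.sqrt ((N:ℝ)^2*dmin*r^2) = (N:ℝ)*Real.sqrt dmin*r := by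
        rw [show (N:ℝ)^2*dmin*r^2 = ((N:ℝ)*Real.sqrt dmin*r)^2 by
          rw [mul_pow, mul_pow, Real.sq_sqrt hdminpos.le]]
        exact Real.sqrt_sq (by positivity)
      linarith
    have hreal : (∏ i, b i) / r ^ (Fintype.card (Fin N ⊕ Fin N))
        ≤ (2 * (N:ℝ) * β ^ ((N : ℝ) - 1 / 2)) /
          (r ^ (2 * N - 1) * P * (2 / Real.sqrt dmin)) := by
      rw [hRHS, hprodA, hcard, div_div, div_le_div_iff₀ (by positivity) (by positivity)]
      have hr2N : r ^ (2*N) = r ^ (2*N-1) * r := by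
        rw [← pow_succ]
        congr 1
        omega
      calc β^N * (Real.sqrt β * (r^(2*N-1) * P))
          = (β^N * r^(2*N-1) * P) * Real.sqrt β := by ring
        _ ≤ (β^N * r^(2*N-1) * P) * ((N:ℝ)*Real.sqrt dmin*r) :=
            mul_le_mul_of_nonneg_left key (by positivity)
        _ = (N:ℝ)*β^N*Real.sqrt dmin * (P * (r^(2*N-1)*r)) := by ring
        _ = (N:ℝ)*β^N*Real.sqrt dmin * (P * r^(2*N)) := by rw [← hr2N]
    calc μ T ≤ μ S := hTle
      _ ≤ ENNReal.ofReal ((∏ i, b i) / r ^ (Fintype.card (Fin N ⊕ Fin N))) := hbound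
      _ ≤ _ := ENNReal.ofReal_le_ofReal hreal
  · -- Case B : large β
    push_neg at hcase
    have hNm1 : (0:ℝ) ≤ (N:ℝ) - 1 := by
      have : (1:ℝ) ≤ (N:ℝ) := by exact_mod_cast hN
      linarith
    have hKpos : ∀ i, (0:ℝ) < β + ((N:ℝ)-1) * d i * r^2 := fun i => by
      nlinarith [mul_nonneg (mul_nonneg hNm1 (hd i).le) (sq_nonneg r)]
    set b : (Fin N ⊕ Fin N) → ℝ :=
      fun i => Real.sqrt ((N:ℝ) * r^2 * β / (β + ((N:ℝ)-1) * d i * r^2)) with hb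
    have hbpos : ∀ i, 0 < b i := fun i =>
      Real.sqrt_pos.mpr (div_pos (by positivity) (hKpos i))
    have hcone : ∀ y : Fin N ⊕ Fin N → ℝ, 0 < euclNorm y → euclNorm y ≤ r →
        (fun i => (r / euclNorm y) * y i) ∈ S → ∑ i, (y i / b i) ^ 2 ≤ 1 := by
      intro y h1 h2 h3
      obtain ⟨hdy, hy2⟩ := hcone_core y h1 h2 h3
      have hterm : ∀ i, (y i / b i) ^ 2
          = y i ^ 2 * (β + ((N:ℝ)-1) * d i * r^2) / ((N:ℝ) * r^2 * β) := by
        intro i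
        simp only [hb]
        rw [div_pow, Real.sq_sqrt (le_of_lt (div_pos (by positivity) (hKpos i))),
          div_div_eq_mul_div]
      rw [Finset.sum_congr rfl fun i _ => hterm i, ← Finset.sum_div,
        div_le_one (by positivity)]
      have hsum : ∑ i, y i ^ 2 * (β + ((N:ℝ)-1) * d i * r^2)
          = β * (∑ i, y i ^ 2) + (((N:ℝ)-1) * r^2) * (∑ i, d i * y i ^ 2) := by
        rw [Finset.mul_sum, Finset.mul_sum, ← Finset.sum_add_distrib]
        exact Finset.sum_congr rfl fun i _ => by ring
      rw [hsum]
      have e1 : β * (∑ i, y i ^ 2) ≤ β * r^2 := mul_le_mul_of_nonneg_left hy2 hβ.le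
      have e2 : (((N:ℝ)-1) * r^2) * (∑ i, d i * y i ^ 2) ≤ (((N:ℝ)-1)*r^2) * β :=
        mul_le_mul_of_nonneg_left hdy (by positivity)
      nlinarith [e1, e2]
    have hbound := Aux.main_measure_bound r hr μ hsupp hinv S hSmeas b hbpos hcone
    set Q : ℝ := ∏ i, Real.sqrt (β + ((N:ℝ)-1) * d i * r^2) with hQ
    have hQpos : 0 < Q := Finset.prod_pos fun i _ => Real.sqrt_pos.mpr (hKpos i)
    have hprodB : ∏ i, b i = ((N:ℝ) * r^2 * β)^N / Q := by
      have h1 : ∀ i : Fin N ⊕ Fin N,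
          Real.sqrt ((N:ℝ) * r^2 * β / (β + ((N:ℝ)-1) * d i * r^2))
          = Real.sqrt ((N:ℝ) * r^2 * β) / Real.sqrt (β + ((N:ℝ)-1) * d i * r^2) :=
        fun i => Real.sqrt_div (by positivity) _
      simp only [hb]
      rw [Finset.prod_congr rfl fun i _ => h1 i, Finset.prod_div_distrib,
        Finset.prod_const, Finset.card_univ, hcard, pow_mul,
        Real.sq_sqrt (by positivity : (0:ℝ) ≤ (N:ℝ) * r^2 * β), ← hQ]
    have key2 : (N:ℝ)^(N-1) * Real.sqrt β * r^(2*N-1) * P ≤ Real.sqrt dmin * Q := by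
      have hsqle : ∀ u v : ℝ, 0 ≤ u → 0 ≤ v → u^2 ≤ v^2 → u ≤ v := by
        intro u v hu hv h
        nlinarith
      apply hsqle _ _ (by positivity) (by positivity)
      have hPsq : P^2 = ∏ i, d i := by
        rw [hP]; exact Aux.prod_sqrt_sq d (fun i => (hd i).le)
      have hQsq : Q^2 = ∏ i, (β + ((N:ℝ)-1) * d i * r^2) := by
        rw [hQ]; exact Aux.prod_sqrt_sq _ (fun i => (hKpos i).le)
      have hNpow : ((N:ℝ)^(N-1))^2 = (N:ℝ)^(2*N-2) := by
        rw [← pow_mul]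
        congr 1
        omega
      have hL : ((N:ℝ)^(N-1) * Real.sqrt β * r^(2*N-1) * P)^2
          = (N:ℝ)^(2*N-2) * β * (r^(2*N-1))^2 * ∏ i, d i := by
        calc ((N:ℝ)^(N-1) * Real.sqrt β * r^(2*N-1) * P)^2
            = ((N:ℝ)^(N-1))^2 * (Real.sqrt β)^2 * (r^(2*N-1))^2 * P^2 := by ring
          _ = (N:ℝ)^(2*N-2) * β * (r^(2*N-1))^2 * ∏ i, d i := by
              rw [hNpow, Real.sq_sqrt hβ.le, hPsq]
      have hRq : (Real.sqrt dmin * Q)^2 = dmin * ∏ i, (β + ((N:ℝ)-1) * d i * r^2) := by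
        calc (Real.sqrt dmin * Q)^2 = (Real.sqrt dmin)^2 * Q^2 := by ring
          _ = dmin * ∏ i, (β + ((N:ℝ)-1) * d i * r^2) := by
              rw [Real.sq_sqrt hdminpos.le, hQsq]
      rw [hL, hRq]
      exact Aux.caseB_key N hN d hd dmin hdminpos a ha1 ha2 r β hr hβ hcase.le
    have hreal : (∏ i, b i) / r ^ (Fintype.card (Fin N ⊕ Fin N))
        ≤ (2 * (N:ℝ) * β ^ ((N : ℝ) - 1 / 2)) /
          (r ^ (2 * N - 1) * P * (2 / Real.sqrt dmin)) := by
      rw [hRHS, hprodB, hcard, div_div, div_le_div_iff₀ (by positivity) (by positivity)]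
      have hexpand : ((N:ℝ) * r^2 * β)^N = (N:ℝ)^N * r^(2*N) * β^N := by
        rw [mul_pow, mul_pow, ← pow_mul]
      have hNN : (N:ℝ)^N = (N:ℝ)^(N-1) * (N:ℝ) := by
        rw [← pow_succ]
        congr 1
        omega
      have hmul := mul_le_mul_of_nonneg_left key2
        (show (0:ℝ) ≤ (N:ℝ) * β^N * r^(2*N) by positivity)
      calc ((N:ℝ)*r^2*β)^N * (Real.sqrt β * (r^(2*N-1) * P))
          = ((N:ℝ)*β^N*r^(2*N)) * ((N:ℝ)^(N-1) * Real.sqrt β * r^(2*N-1) * P) := by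
            rw [hexpand, hNN]; ring
        _ ≤ ((N:ℝ)*β^N*r^(2*N)) * (Real.sqrt dmin * Q) := hmul
        _ = (N:ℝ)*β^N*Real.sqrt dmin * (Q * r^(2*N)) := by ring
    calc μ T ≤ μ S := hTle
      _ ≤ ENNReal.ofReal ((∏ i, b i) / r ^ (Fintype.card (Fin N ⊕ Fin N))) := hbound
      _ ≤ _ := ENNReal.ofReal_le_ofReal hreal

end
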